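/- Let (G_i)_{i∈I} be groups with normal subgroups H_i ⊴ G_i, let A_i ⊆ G_i be sets of right coset representatives for H_i, and extend the induced set-theoretic sections G_i/H_i → G_i to a section φ: ∗_i (G_i/H_i) → ∗_i G_i of the canonical quotient of free products. Then the kernel of ∗_i G_i → ∗_i (G_i/H_i) is generated by the elements φ(u) h φ(u)⁻¹ for u ∈ ∗_i (G_i/H_i), i ∈ I, and h ∈ H_i. -/

import Mathlib

open Monoid Monoid.CoprodI

/-- Apply the sections `σ i` letterwise to a reduced word over the quotients. -/
private def phiW {ι : Type*} (G : ι → Type*) [∀ i, Group (G i)]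
    (H : ∀ i, Subgroup (G i)) [∀ i, (H i).Normal] (σ : ∀ i, G i ⧸ H i → G i)
    (w : Monoid.CoprodI.Word (fun i => G i ⧸ H i)) : Monoid.CoprodI G :=
  (w.toList.map (fun p : Σ i, G i ⧸ H i => Monoid.CoprodI.of (σ p.1 p.2))).prod

private theorem phiW_cons {ι : Type*} (G : ι → Type*) [∀ i, Group (G i)]
    (H : ∀ i, Subgroup (G i)) [∀ i, (H i).Normal] (σ : ∀ i, G i ⧸ H i → G i) {i : ι}
    (m : G i ⧸ H i) (w : Monoid.CoprodI.Word (fun i => G i ⧸ H i)) (hmw) (h1) :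
    phiW G H σ (Monoid.CoprodI.Word.cons (M := fun i => G i ⧸ H i) m w hmw h1) =
      Monoid.CoprodI.of (σ i m) * phiW G H σ w := by
  simp [phiW, Monoid.CoprodI.Word.cons]

/-- Let `(Gᵢ)` be groups with normal subgroups `Hᵢ ⊴ Gᵢ`, let `σᵢ : Gᵢ/Hᵢ → Gᵢ` be
set-theoretic sections of the quotient maps (choices of coset representatives), and let
`φ : ∗ᵢ (Gᵢ/Hᵢ) → ∗ᵢ Gᵢ` be the section of the canonical projection `π` obtained by applying
the `σᵢ` letterwise to the normal form (reduced word) of an element.  Then the kernel of `π`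
is generated by the elements `φ(u) h φ(u)⁻¹` for `u ∈ ∗ᵢ (Gᵢ/Hᵢ)`, `i`, and `h ∈ Hᵢ`. -/
theorem stmt_18 {ι : Type*} [DecidableEq ι] (G : ι → Type*) [∀ i, Group (G i)]
    (H : ∀ i, Subgroup (G i)) [∀ i, (H i).Normal]
    [∀ i, DecidableEq (G i ⧸ H i)]
    (σ : ∀ i, G i ⧸ H i → G i)
    (hσ : ∀ i (x : G i ⧸ H i), QuotientGroup.mk' (H i) (σ i x) = x)
    (π : Monoid.CoprodI G →* Monoid.CoprodI (fun i => G i ⧸ H i))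
    (hπ : π = Monoid.CoprodI.lift
      (fun i => (Monoid.CoprodI.of (M := fun i => G i ⧸ H i)).comp (QuotientGroup.mk' (H i))))
    (φ : Monoid.CoprodI (fun i => G i ⧸ H i) → Monoid.CoprodI G)
    (hφ : ∀ u, φ u =
      (((Monoid.CoprodI.Word.equiv u).toList.map
        (fun p : Σ i, G i ⧸ H i => Monoid.CoprodI.of (σ p.1 p.2))).prod)) :
    π.ker = Subgroup.closure
      {x : Monoid.CoprodI G | ∃ (u : Monoid.CoprodI (fun i => G i ⧸ H i)) (i : ι) (h : G i),
        h ∈ H i ∧ x = φ u * Monoid.CoprodI.of h * (φ u)⁻¹} := by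
  classical
  set K := Subgroup.closure
      {x : Monoid.CoprodI G | ∃ (u : Monoid.CoprodI (fun i => G i ⧸ H i)) (i : ι) (h : G i),
        h ∈ H i ∧ x = φ u * Monoid.CoprodI.of h * (φ u)⁻¹} with hK
  have hφ2 : ∀ u, φ u = phiW G H σ (Monoid.CoprodI.Word.equiv u) := hφ
  have hπof : ∀ {i : ι} (m : G i),
      π (CoprodI.of m) = CoprodI.of (M := fun i => G i ⧸ H i) (QuotientGroup.mk' (H i) m) := by
    intro i m; rw [hπ, CoprodI.lift_of]; rfl
  have φ1 : φ 1 = 1 := by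
    have he : Word.equiv (1 : CoprodI (fun i => G i ⧸ H i)) = Word.empty :=
      one_smul (CoprodI (fun i => G i ⧸ H i)) (Word.empty (M := fun i => G i ⧸ H i))
    rw [hφ2, he]; rfl
  have genK : ∀ (u : CoprodI (fun i => G i ⧸ H i)) (i : ι) (h : G i), h ∈ H i →
      φ u * CoprodI.of h * (φ u)⁻¹ ∈ K := fun u i h hh =>
    Subgroup.subset_closure ⟨u, i, h, hh, rfl⟩
  have ofK : ∀ {i : ι} {h : G i}, h ∈ H i → CoprodI.of h ∈ K := by
    intro i h hh
    have := genK 1 i h hh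
    simpa [φ1] using this
  have πφ : ∀ u, π (φ u) = u := by
    intro u
    rw [hφ, map_list_prod, List.map_map]
    have hc : (⇑π ∘ fun p : Σ i, G i ⧸ H i => CoprodI.of (σ p.1 p.2)) =
        fun p : Σ i, G i ⧸ H i => CoprodI.of (M := fun i => G i ⧸ H i) p.2 := by
      funext p; simp only [Function.comp_apply, hπof, hσ]
    rw [hc]
    exact Word.equiv.symm_apply_apply u
  -- rcons computation
  have hrcons : ∀ (i : ι) (p : Word.Pair (fun i => G i ⧸ H i) i), ∃ e : G i, e ∈ H i ∧
      phiW G H σ (Word.rcons p) = CoprodI.of (σ i p.head * e) * phiW G H σ p.tail := by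
    intro i p
    by_cases h1 : p.head = 1
    · refine ⟨(σ i 1)⁻¹, ?_, ?_⟩
      · have : QuotientGroup.mk' (H i) (σ i 1) = 1 := hσ i 1
        rw [QuotientGroup.mk'_apply] at this
        exact inv_mem ((QuotientGroup.eq_one_iff _).mp this)
      · rw [show Word.rcons p = p.tail from dif_pos h1, h1, mul_inv_cancel, map_one, one_mul]
    · rw [show Word.rcons p = Word.cons (M := fun i => G i ⧸ H i) p.head p.tail p.fstIdx_ne h1 from dif_neg h1,
        phiW_cons]
      exact ⟨1, one_mem _, by rw [mul_one]⟩
  -- key lemma: moving a σ-letter across φ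
  have Dleft : ∀ (i : ι) (x : G i ⧸ H i) (u : CoprodI (fun i => G i ⧸ H i)),
      CoprodI.of (σ i x) * φ u *
        (φ (CoprodI.of (M := fun i => G i ⧸ H i) x * u))⁻¹ ∈ K := by
    intro i x u
    have hequiv : Word.equiv (CoprodI.of (M := fun i => G i ⧸ H i) x * u) =
        CoprodI.of (M := fun i => G i ⧸ H i) x • Word.equiv u :=
      mul_smul (CoprodI.of (M := fun i => G i ⧸ H i) x) u (Word.empty (M := fun i => G i ⧸ H i))
    rw [hφ2 u, hφ2 _, hequiv]
    set w := Word.equiv u with hwdef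
    set p := Word.equivPair i w with hp
    have hw : Word.rcons p = w := by
      rw [hp, ← Word.equivPair_symm]; exact (Word.equivPair i).symm_apply_apply w
    have hsm : CoprodI.of (M := fun i => G i ⧸ H i) x • w =
        Word.rcons (⟨x * p.head, p.tail, p.fstIdx_ne⟩ : Word.Pair (fun i => G i ⧸ H i) i) :=
      Word.of_smul_def i w x
    obtain ⟨e₁, he₁, h1⟩ := hrcons i (⟨x * p.head, p.tail, p.fstIdx_ne⟩ : Word.Pair (fun i => G i ⧸ H i) i)
    obtain ⟨e₂, he₂, h2⟩ := hrcons i p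
    rw [hsm, h1, ← hw, h2]
    have heq : CoprodI.of (σ i x) * (CoprodI.of (σ i p.head * e₂) * phiW G H σ p.tail) *
        (CoprodI.of (σ i (x * p.head) * e₁) * phiW G H σ p.tail)⁻¹ =
        CoprodI.of (σ i x * (σ i p.head * e₂) * (σ i (x * p.head) * e₁)⁻¹) := by
      simp only [map_mul, map_inv, mul_inv_rev]
      group
    rw [heq]
    apply ofK
    have hq : QuotientGroup.mk' (H i)
        (σ i x * (σ i p.head * e₂) * (σ i (x * p.head) * e₁)⁻¹) = 1 := by
      have he₁' : QuotientGroup.mk' (H i) e₁ = 1 := by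
        rw [QuotientGroup.mk'_apply]; exact (QuotientGroup.eq_one_iff _).mpr he₁
      have he₂' : QuotientGroup.mk' (H i) e₂ = 1 := by
        rw [QuotientGroup.mk'_apply]; exact (QuotientGroup.eq_one_iff _).mpr he₂
      simp only [map_mul, map_inv, hσ, he₁', he₂']
      group
    rw [QuotientGroup.mk'_apply] at hq
    exact (QuotientGroup.eq_one_iff _).mp hq
  have Cleft : ∀ (i : ι) (m : G i) (u : CoprodI (fun i => G i ⧸ H i)),
      CoprodI.of m * φ u *
        (φ (CoprodI.of (M := fun i => G i ⧸ H i) (QuotientGroup.mk' (H i) m) * u))⁻¹ ∈ K := by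
    intro i m u
    set x : G i ⧸ H i := QuotientGroup.mk' (H i) m with hx
    have hmem : m * (σ i x)⁻¹ ∈ H i := by
      have h1 : QuotientGroup.mk' (H i) (m * (σ i x)⁻¹) = 1 := by
        rw [map_mul, map_inv, hσ, hx]; group
      rw [QuotientGroup.mk'_apply] at h1
      exact (QuotientGroup.eq_one_iff _).mp h1
    have heq : CoprodI.of m * φ u *
        (φ (CoprodI.of (M := fun i => G i ⧸ H i) x * u))⁻¹ =
        CoprodI.of (m * (σ i x)⁻¹) *
          (CoprodI.of (σ i x) * φ u *
            (φ (CoprodI.of (M := fun i => G i ⧸ H i) x * u))⁻¹) := by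
      rw [map_mul, map_inv]; group
    rw [heq]
    exact K.mul_mem (ofK hmem) (Dleft i x u)
  -- K is closed under conjugation by letters
  have conjL : ∀ {j : ι} (m : G j) (k : CoprodI G), k ∈ K →
      CoprodI.of m * k * (CoprodI.of m)⁻¹ ∈ K := by
    intro j m k hk
    rw [hK] at hk
    induction hk using Subgroup.closure_induction with
    | mem s hs =>
      obtain ⟨u, i, h, hh, rfl⟩ := hs
      set v := CoprodI.of (M := fun i => G i ⧸ H i) (QuotientGroup.mk' (H j) m) * u with hv
      have key := Cleft j m u
      have heq : CoprodI.of m * (φ u * CoprodI.of h * (φ u)⁻¹) * (CoprodI.of m)⁻¹ =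
          (CoprodI.of m * φ u * (φ v)⁻¹) * (φ v * CoprodI.of h * (φ v)⁻¹) *
            (CoprodI.of m * φ u * (φ v)⁻¹)⁻¹ := by group
      rw [heq]
      exact K.mul_mem (K.mul_mem key (genK v i h hh)) (K.inv_mem key)
    | one => simpa using K.one_mem
    | mul a b _ _ ha hb =>
      have heq : CoprodI.of m * (a * b) * (CoprodI.of m)⁻¹ =
          (CoprodI.of m * a * (CoprodI.of m)⁻¹) * (CoprodI.of m * b * (CoprodI.of m)⁻¹) := by
        group
      rw [heq]; exact K.mul_mem ha hb
    | inv a _ ha =>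
      have heq : CoprodI.of m * a⁻¹ * (CoprodI.of m)⁻¹ =
          (CoprodI.of m * a * (CoprodI.of m)⁻¹)⁻¹ := by group
      rw [heq]; exact K.inv_mem ha
  -- K is normal
  have conjK : ∀ (g : CoprodI G) (k : CoprodI G), k ∈ K → g * k * g⁻¹ ∈ K := by
    intro g
    induction g using Monoid.CoprodI.induction_left with
    | one => intro k hk; simpa using hk
    | mul m x ih =>
      intro k hk
      have heq : CoprodI.of m * x * k * (CoprodI.of m * x)⁻¹ =
          CoprodI.of m * (x * k * x⁻¹) * (CoprodI.of m)⁻¹ := by group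
      rw [heq]
      exact conjL m _ (ih k hk)
  -- the main computation
  have main : ∀ g : CoprodI G, (φ (π g))⁻¹ * g ∈ K := by
    intro g
    induction g using Monoid.CoprodI.induction_left with
    | one => rw [map_one, φ1]; simpa using K.one_mem
    | mul m x ih =>
      rw [map_mul, hπof]
      set v := CoprodI.of (M := fun i => G i ⧸ H i)
        (QuotientGroup.mk' (H _) m) * π x with hv
      have key := Cleft _ m (π x)
      have heq : (φ v)⁻¹ * (CoprodI.of m * x) =
          ((φ v)⁻¹ * (CoprodI.of m * φ (π x) * (φ v)⁻¹) * ((φ v)⁻¹)⁻¹) *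
            ((φ (π x))⁻¹ * x) := by group
      rw [heq]
      exact K.mul_mem (conjK _ _ key) ih
  -- conclude
  apply le_antisymm
  · intro g hg
    have hg1 : π g = 1 := hg
    have := main g
    rwa [hg1, φ1, inv_one, one_mul] at this
  · rw [hK, Subgroup.closure_le]
    rintro x ⟨u, i, h, hh, rfl⟩
    have hh1 : CoprodI.of (M := fun i => G i ⧸ H i) (QuotientGroup.mk' (H i) h) = 1 := by
      have : QuotientGroup.mk' (H i) h = 1 := by
        rw [QuotientGroup.mk'_apply]; exact (QuotientGroup.eq_one_iff _).mpr hh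
      rw [this, map_one]
    have : π (φ u * CoprodI.of h * (φ u)⁻¹) = 1 := by
      rw [map_mul, map_mul, map_inv, πφ, hπof, hh1]
      group
    exact this
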